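/- Let γ = (γ₁, γ₂) : I → ℝ² be a C² unit-speed curve on an interval I, let ν(s) = (−γ₂'(s), γ₁'(s)) be its unit normal, let u be C² on an open neighborhood of γ(I), and suppose Du(γ(s)) = ĉ·ν(s) for all s ∈ I and some constant ĉ ∈ ℝ. Then ⟨D²u(γ(s))·γ'(s), ν(s)⟩ = 0 for all s ∈ I; that is, γ'(s) and ν(s) are eigendirections of the Hessian D²u at every point of the curve. -/

import Mathlib

open Set Metric Topology Asymptotics MvPolynomial Matrix

/-- Partial derivative with respect to the first variable. -/
noncomputable def pdx (f : ℝ × ℝ → ℝ) (p : ℝ × ℝ) : ℝ :=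
  deriv (fun x => f (x, p.2)) p.1

/-- Partial derivative with respect to the second variable. -/
noncomputable def pdy (f : ℝ × ℝ → ℝ) (p : ℝ × ℝ) : ℝ :=
  deriv (fun y => f (p.1, y)) p.2

/-- The Laplacian `Δu = u_xx + u_yy`. -/
noncomputable def lap (f : ℝ × ℝ → ℝ) (p : ℝ × ℝ) : ℝ :=
  pdx (pdx f) p + pdy (pdy f) p

/-- The Hessian determinant `det D²u = u_xx u_yy - u_xy²`. -/
noncomputable def hessDet (f : ℝ × ℝ → ℝ) (p : ℝ × ℝ) : ℝ :=
  pdx (pdx f) p * pdy (pdy f) p - (pdx (pdy f) p) ^ 2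

/-- The Jacobian `J[f,g] = f_x g_y - f_y g_x`. -/
noncomputable def jacDet (f g : ℝ × ℝ → ℝ) (p : ℝ × ℝ) : ℝ :=
  pdx f p * pdy g p - pdy f p * pdx g p

lemma pdx_of_hasFDerivAt {f : ℝ × ℝ → ℝ} {q : ℝ × ℝ} {L : ℝ × ℝ →L[ℝ] ℝ}
    (h : HasFDerivAt f L q) : pdx f q = L (1, 0) := by
  have h1 : HasDerivAt (fun x : ℝ => (x, q.2)) ((1 : ℝ), (0 : ℝ)) q.1 :=
    HasDerivAt.prodMk (hasDerivAt_id q.1) (hasDerivAt_const q.1 q.2)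
  exact (h.comp_hasDerivAt q.1 h1).deriv

lemma pdy_of_hasFDerivAt {f : ℝ × ℝ → ℝ} {q : ℝ × ℝ} {L : ℝ × ℝ →L[ℝ] ℝ}
    (h : HasFDerivAt f L q) : pdy f q = L (0, 1) := by
  have h1 : HasDerivAt (fun y : ℝ => (q.1, y)) ((0 : ℝ), (1 : ℝ)) q.2 :=
    HasDerivAt.prodMk (hasDerivAt_const q.2 q.1) (hasDerivAt_id q.2)
  exact (h.comp_hasDerivAt q.2 h1).deriv

lemma clm_apply_basis (L : ℝ × ℝ →L[ℝ] ℝ) (v : ℝ × ℝ) :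
    L v = v.1 * L (1, 0) + v.2 * L (0, 1) := by
  have hv : v = v.1 • ((1 : ℝ), (0 : ℝ)) + v.2 • ((0 : ℝ), (1 : ℝ)) := by
    ext <;> simp
  rw [hv, map_add, _root_.map_smul, _root_.map_smul]
  simp [hv.symm]

/-- If `γ` is a `C²` unit-speed curve on an interval `I` with unit normal
`ν = (−γ₂', γ₁')`, `u` is `C²` on an open neighborhood of `γ(I)`, and
`Du(γ(s)) = c'·ν(s)` for a constant `c'`, then `⟨D²u(γ(s))·γ'(s), ν(s)⟩ = 0` for all
`s ∈ I`, i.e. `γ'` and `ν` are eigendirections of the Hessian along the curve. -/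
theorem boundary_directions_are_eigendirections
    (I : Set ℝ) (hIopen : IsOpen I) (hIint : I.OrdConnected)
    (γ : ℝ → ℝ × ℝ) (hγ : ContDiffOn ℝ 2 γ I)
    (hunit : ∀ s ∈ I,
      (deriv (fun τ => (γ τ).1) s) ^ 2 + (deriv (fun τ => (γ τ).2) s) ^ 2 = 1)
    (u : ℝ × ℝ → ℝ) (W : Set (ℝ × ℝ)) (hWopen : IsOpen W) (hWγ : γ '' I ⊆ W)
    (hu : ContDiffOn ℝ 2 u W)
    (c' : ℝ)
    (hgrad : ∀ s ∈ I,
      pdx u (γ s) = c' * (-(deriv (fun τ => (γ τ).2) s)) ∧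
      pdy u (γ s) = c' * deriv (fun τ => (γ τ).1) s) :
    ∀ s ∈ I,
      (pdx (pdx u) (γ s) * deriv (fun τ => (γ τ).1) s
          + pdy (pdx u) (γ s) * deriv (fun τ => (γ τ).2) s)
            * (-(deriv (fun τ => (γ τ).2) s))
        + (pdx (pdy u) (γ s) * deriv (fun τ => (γ τ).1) s
          + pdy (pdy u) (γ s) * deriv (fun τ => (γ τ).2) s)
            * deriv (fun τ => (γ τ).1) s = 0 := by
  intro s hs
  set γ₁ : ℝ → ℝ := fun τ => (γ τ).1 with hγ₁def
  set γ₂ : ℝ → ℝ := fun τ => (γ τ).2 with hγ₂def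
  have hInhds : I ∈ 𝓝 s := hIopen.mem_nhds hs
  have hp : γ s ∈ W := hWγ ⟨s, hs, rfl⟩
  have hWnhds : W ∈ 𝓝 (γ s) := hWopen.mem_nhds hp
  -- differentiability of γ at s
  have hγs : HasDerivAt γ (deriv γ s) s :=
    (((hγ.contDiffAt hInhds).differentiableAt two_ne_zero)).hasDerivAt
  set v : ℝ × ℝ := deriv γ s with hvdef
  have hγ1s : HasDerivAt γ₁ v.1 s := by
    have := (ContinuousLinearMap.fst ℝ ℝ ℝ).hasFDerivAt.comp_hasDerivAt s hγs
    exact this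
  have hγ2s : HasDerivAt γ₂ v.2 s := by
    have := (ContinuousLinearMap.snd ℝ ℝ ℝ).hasFDerivAt.comp_hasDerivAt s hγs
    exact this
  have hg1 : deriv γ₁ s = v.1 := hγ1s.deriv
  have hg2 : deriv γ₂ s = v.2 := hγ2s.deriv
  -- second derivatives of γ₁, γ₂
  have hγ₁C : ContDiffOn ℝ 2 γ₁ I := (contDiff_fst.comp_contDiffOn hγ)
  have hγ₂C : ContDiffOn ℝ 2 γ₂ I := (contDiff_snd.comp_contDiffOn hγ)
  have hd1 : DifferentiableAt ℝ (deriv γ₁) s := by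
    have h := hγ₁C.deriv_of_isOpen hIopen (by norm_num : (1 : WithTop ℕ∞) + 1 ≤ 2)
    exact (h.differentiableOn one_ne_zero).differentiableAt hInhds
  have hd2 : DifferentiableAt ℝ (deriv γ₂) s := by
    have h := hγ₂C.deriv_of_isOpen hIopen (by norm_num : (1 : WithTop ℕ∞) + 1 ≤ 2)
    exact (h.differentiableOn one_ne_zero).differentiableAt hInhds
  set a : ℝ := deriv (deriv γ₁) s with hadef
  set b : ℝ := deriv (deriv γ₂) s with hbdef
  have ha : HasDerivAt (deriv γ₁) a s := hd1.hasDerivAt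
  have hb : HasDerivAt (deriv γ₂) b s := hd2.hasDerivAt
  -- differentiating the unit-speed relation
  have key : v.1 * a + v.2 * b = 0 := by
    have hφ : HasDerivAt (fun τ => (deriv γ₁ τ) ^ 2 + (deriv γ₂ τ) ^ 2)
        ((2 : ℕ) * deriv γ₁ s ^ 1 * a + (2 : ℕ) * deriv γ₂ s ^ 1 * b) s :=
      (ha.pow 2).add (hb.pow 2)
    have heq : (fun τ => (deriv γ₁ τ) ^ 2 + (deriv γ₂ τ) ^ 2) =ᶠ[𝓝 s]
        (fun _ => (1 : ℝ)) :=
      Filter.eventuallyEq_of_mem hInhds fun τ hτ => hunit τ hτ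
    have h0 : (2 : ℕ) * deriv γ₁ s ^ 1 * a + (2 : ℕ) * deriv γ₂ s ^ 1 * b = 0 := by
      rw [← hφ.deriv, heq.deriv_eq, deriv_const]
    rw [hg1, hg2] at h0
    push_cast at h0
    linarith
  -- the gradient components as C¹ functions
  have hups : ContDiffAt ℝ 2 u (γ s) := hu.contDiffAt hWnhds
  have hfd : ContDiffAt ℝ 1 (fderiv ℝ u) (γ s) :=
    hups.fderiv_right (le_of_eq (by norm_num))
  have hudiff : ∀ q ∈ W, HasFDerivAt u (fderiv ℝ u q) q := fun q hq =>
    (((hu.contDiffAt (hWopen.mem_nhds hq)).differentiableAt two_ne_zero)).hasFDerivAt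
  set Gx : ℝ × ℝ → ℝ := fun q => fderiv ℝ u q (1, 0) with hGxdef
  set Gy : ℝ × ℝ → ℝ := fun q => fderiv ℝ u q (0, 1) with hGydef
  have hGx : DifferentiableAt ℝ Gx (γ s) :=
    (hfd.differentiableAt one_ne_zero).clm_apply (differentiableAt_const _)
  have hGy : DifferentiableAt ℝ Gy (γ s) :=
    (hfd.differentiableAt one_ne_zero).clm_apply (differentiableAt_const _)
  have hpdxW : ∀ q ∈ W, pdx u q = Gx q := fun q hq => pdx_of_hasFDerivAt (hudiff q hq)
  have hpdyW : ∀ q ∈ W, pdy u q = Gy q := fun q hq => pdy_of_hasFDerivAt (hudiff q hq)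
  have hFGx : pdx u =ᶠ[𝓝 (γ s)] Gx := Filter.eventuallyEq_of_mem hWnhds hpdxW
  have hFGy : pdy u =ᶠ[𝓝 (γ s)] Gy := Filter.eventuallyEq_of_mem hWnhds hpdyW
  set Lx : ℝ × ℝ →L[ℝ] ℝ := fderiv ℝ Gx (γ s) with hLxdef
  set Ly : ℝ × ℝ →L[ℝ] ℝ := fderiv ℝ Gy (γ s) with hLydef
  have hFx : HasFDerivAt (pdx u) Lx (γ s) :=
    hGx.hasFDerivAt.congr_of_eventuallyEq hFGx
  have hFy : HasFDerivAt (pdy u) Ly (γ s) :=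
    hGy.hasFDerivAt.congr_of_eventuallyEq hFGy
  -- chain rule along γ
  have hchainx : HasDerivAt (fun τ => pdx u (γ τ)) (Lx v) s :=
    hFx.comp_hasDerivAt s hγs
  have hchainy : HasDerivAt (fun τ => pdy u (γ τ)) (Ly v) s :=
    hFy.comp_hasDerivAt s hγs
  -- the gradient hypothesis along γ
  have heqx : (fun τ => pdx u (γ τ)) =ᶠ[𝓝 s] (fun τ => c' * (-(deriv γ₂ τ))) :=
    Filter.eventuallyEq_of_mem hInhds fun τ hτ => (hgrad τ hτ).1
  have heqy : (fun τ => pdy u (γ τ)) =ᶠ[𝓝 s] (fun τ => c' * deriv γ₁ τ) :=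
    Filter.eventuallyEq_of_mem hInhds fun τ hτ => (hgrad τ hτ).2
  have hrhsx : HasDerivAt (fun τ => c' * (-(deriv γ₂ τ))) (c' * (-b)) s :=
    (hb.neg).const_mul c'
  have hrhsy : HasDerivAt (fun τ => c' * deriv γ₁ τ) (c' * a) s :=
    ha.const_mul c'
  have hLxv : Lx v = c' * (-b) := by
    rw [← hchainx.deriv, ← hrhsx.deriv]; exact heqx.deriv_eq
  have hLyv : Ly v = c' * a := by
    rw [← hchainy.deriv, ← hrhsy.deriv]; exact heqy.deriv_eq
  -- identify pd's of pdx u, pdy u with Lx, Ly entries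
  have e1 : pdx (pdx u) (γ s) = Lx (1, 0) := pdx_of_hasFDerivAt hFx
  have e2 : pdy (pdx u) (γ s) = Lx (0, 1) := pdy_of_hasFDerivAt hFx
  have e3 : pdx (pdy u) (γ s) = Ly (1, 0) := pdx_of_hasFDerivAt hFy
  have e4 : pdy (pdy u) (γ s) = Ly (0, 1) := pdy_of_hasFDerivAt hFy
  have h1 : pdx (pdx u) (γ s) * deriv γ₁ s + pdy (pdx u) (γ s) * deriv γ₂ s
      = c' * (-b) := by
    rw [e1, e2, hg1, hg2, ← hLxv]; linarith [clm_apply_basis Lx v]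
  have h2 : pdx (pdy u) (γ s) * deriv γ₁ s + pdy (pdy u) (γ s) * deriv γ₂ s
      = c' * a := by
    rw [e3, e4, hg1, hg2, ← hLyv]; linarith [clm_apply_basis Ly v]
  show (pdx (pdx u) (γ s) * deriv γ₁ s + pdy (pdx u) (γ s) * deriv γ₂ s)
        * (-(deriv γ₂ s))
      + (pdx (pdy u) (γ s) * deriv γ₁ s + pdy (pdy u) (γ s) * deriv γ₂ s)
        * deriv γ₁ s = 0
  rw [h1, h2, hg1, hg2]
  linear_combination c' * key
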